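/- The Baumslag group B = ⟨a, b ∣ a = [a, a^b]⟩ is not residually finite: the image of a in every finite quotient of B is trivial, while a itself is nontrivial in B. -/

import Mathlib

namespace Stmt14

def a : FreeGroup (Fin 2) := FreeGroup.of 0
def b : FreeGroup (Fin 2) := FreeGroup.of 1

/-- The relator `a⁻¹ [a, a^b]` of the Baumslag group, where `a^b = b⁻¹ a b`
and `[x,y] = x⁻¹y⁻¹xy`. -/
def rel : FreeGroup (Fin 2) :=
  a⁻¹ * (a⁻¹ * (b⁻¹ * a * b)⁻¹ * a * (b⁻¹ * a * b))

/-- The Baumslag group `B = ⟨a, b ∣ a = [a, a^b]⟩`. -/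
abbrev B := PresentedGroup ({rel} : Set (FreeGroup (Fin 2)))

def A : B := PresentedGroup.of 0

/-! ### Auxiliary results for the finite-quotient part -/

lemma nt_lemma (n : ℕ) (hn : 0 < n) (h : n ∣ 2 ^ n - 1) : n = 1 := by
  by_contra hne
  have hp : n.minFac.Prime := Nat.minFac_prime hne
  set p := n.minFac with hpdef
  have hpn : p ∣ n := Nat.minFac_dvd n
  have hpd : p ∣ 2 ^ n - 1 := hpn.trans h
  have h1le : 1 ≤ 2 ^ n := Nat.one_le_two_pow
  haveI : Fact p.Prime := ⟨hp⟩
  have hp2 : p ≠ 2 := by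
    intro hpe
    rw [hpe] at hpd
    have h2 : (2 : ℕ) ∣ 2 ^ n := dvd_pow_self 2 hn.ne'
    have := Nat.dvd_sub h2 hpd
    rw [Nat.sub_sub_self h1le] at this
    exact absurd (Nat.le_of_dvd one_pos this) (by norm_num)
  have hcast : ((2 : ℕ) : ZMod p) ≠ 0 := by
    rw [Ne, ZMod.natCast_eq_zero_iff]
    intro hdvd
    exact hp2 ((Nat.prime_dvd_prime_iff_eq hp Nat.prime_two).mp hdvd)
  have hpow : (2 : ZMod p) ^ n = 1 := by
    have h0 : ((2 ^ n - 1 : ℕ) : ZMod p) = 0 := by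
      rw [ZMod.natCast_eq_zero_iff]; exact hpd
    have : ((2 ^ n : ℕ) : ZMod p) - 1 = 0 := by
      rw [← Nat.cast_one (R := ZMod p), ← Nat.cast_sub h1le]; exact h0
    have h2 : ((2 ^ n : ℕ) : ZMod p) = 1 := by linear_combination this
    push_cast at h2
    exact h2
  set d := orderOf (2 : ZMod p) with hddef
  have hdn : d ∣ n := orderOf_dvd_of_pow_eq_one hpow
  have hdp : d ∣ p - 1 := by
    apply orderOf_dvd_of_pow_eq_one
    have : (2 : ZMod p) = ((2 : ℕ) : ZMod p) := by push_cast; ring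
    rw [this]
    exact ZMod.pow_card_sub_one_eq_one hcast
  have hd1 : d ≠ 1 := by
    intro h1
    have : (2 : ZMod p) = 1 := orderOf_eq_one_iff.mp h1
    have : (1 : ZMod p) = 0 := by linear_combination this
    exact one_ne_zero this
  set q := d.minFac with hqdef
  have hq : q.Prime := Nat.minFac_prime hd1
  have hqn : q ∣ n := (Nat.minFac_dvd d).trans hdn
  have hpq : p ≤ q := Nat.minFac_le_of_dvd hq.two_le hqn
  have hqp : q ≤ p - 1 := Nat.le_of_dvd (by have := hp.two_le; omega)
    ((Nat.minFac_dvd d).trans hdp)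
  have := hp.two_le
  omega

lemma conj_sq_eq {Q : Type} [Group Q] [Finite Q] {x y : Q}
    (h : x⁻¹ * (x⁻¹ * (y⁻¹ * x * y)⁻¹ * x * (y⁻¹ * x * y)) = 1) : x = 1 := by
  set c := y⁻¹ * x * y with hc
  have h3 : x = x⁻¹ * c⁻¹ * x * c := inv_mul_eq_one.mp h
  have h' : c⁻¹ * x * c = x * x := by
    have hmul : x * (x⁻¹ * c⁻¹ * x * c) = x * x := by rw [← h3]
    calc c⁻¹ * x * c = x * (x⁻¹ * c⁻¹ * x * c) := by group
    _ = x * x := hmul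
  have key : ∀ k : ℕ, (c ^ k)⁻¹ * x * c ^ k = x ^ 2 ^ k := by
    intro k
    induction k with
    | zero => simp
    | succ k ih =>
      have hcp : ∀ m : ℕ, (c⁻¹ * x * c) ^ m = c⁻¹ * x ^ m * c := by
        intro m
        have := conj_pow (a := c⁻¹) (b := x) (i := m)
        rwa [inv_inv] at this
      calc (c ^ (k+1))⁻¹ * x * c ^ (k+1)
          = c⁻¹ * ((c ^ k)⁻¹ * x * c ^ k) * c := by rw [pow_succ]; group
        _ = c⁻¹ * x ^ 2 ^ k * c := by rw [ih]
        _ = (c⁻¹ * x * c) ^ 2 ^ k := by rw [hcp]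
        _ = (x * x) ^ 2 ^ k := by rw [h']
        _ = x ^ 2 ^ (k+1) := by
            rw [← pow_two, ← pow_mul, Nat.mul_comm, ← pow_succ]
  have hsc : SemiconjBy y⁻¹ x c := by
    show y⁻¹ * x = c * y⁻¹
    rw [hc]; group
  have horder : orderOf x = orderOf c := SemiconjBy.orderOf_eq y⁻¹ hsc
  have hcn : c ^ orderOf x = 1 := by rw [horder]; exact pow_orderOf_eq_one c
  have hx2n : x ^ 2 ^ orderOf x = x := by
    have := key (orderOf x)
    rw [hcn] at this
    simpa using this.symm
  have hsub : x ^ (2 ^ orderOf x - 1) = 1 := by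
    have h1le : 1 ≤ 2 ^ orderOf x := Nat.one_le_two_pow
    have : x ^ (2 ^ orderOf x - 1) * x = 1 * x := by
      rw [one_mul, ← pow_succ, Nat.sub_add_cancel h1le]
      exact hx2n
    exact mul_right_cancel this
  have hdvd : orderOf x ∣ 2 ^ orderOf x - 1 := orderOf_dvd_of_pow_eq_one hsub
  have hpos : 0 < orderOf x := orderOf_pos x
  have := nt_lemma (orderOf x) hpos hdvd
  exact orderOf_eq_one_iff.mp this

/-! ### Auxiliary results for the nontriviality part: an HNN extension model -/

noncomputable section HNNModel

open Subgroup

def x0 : Equiv.Perm ℚ := Equiv.addRight (1 : ℚ)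
def t0 : Equiv.Perm ℚ := Equiv.mulRight₀ (2⁻¹ : ℚ) (by norm_num)

lemma x0_apply (q : ℚ) : x0 q = q + 1 := rfl
lemma t0_apply (q : ℚ) : t0 q = q * 2⁻¹ := rfl

lemma x0_ne_one : x0 ≠ 1 := by
  intro h
  have := congrArg (fun f : Equiv.Perm ℚ => f 0) h
  simp [x0_apply] at this

lemma hinjx : Function.Injective (zpowersHom (Equiv.Perm ℚ) x0) := by
  rw [injective_iff_map_eq_one]
  intro n hn
  have h : x0 ^ n.toAdd = 1 := hn
  have hz : ∀ m : ℤ, Equiv.addRight (1:ℚ) ^ m = Equiv.addRight (m • (1:ℚ)) := by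
    intro m
    induction m using Int.induction_on with
    | zero => ext; simp
    | succ i ih => rw [zpow_add_one, ih]; ext; simp only [Equiv.Perm.mul_apply, Equiv.coe_addRight, zsmul_eq_mul]; push_cast; ring
    | pred i ih => rw [zpow_sub_one, ih]; ext; simp only [Equiv.Perm.mul_apply, Equiv.Perm.inv_def, Equiv.addRight_symm, Equiv.coe_addRight, zsmul_eq_mul]; push_cast; ring
  rw [x0, hz] at h
  have h2 := congrArg (fun f : Equiv.Perm ℚ => f 0) h
  simp only [Equiv.coe_addRight, Equiv.Perm.one_apply, zero_add, smul_eq_mul, mul_one] at h2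
  rw [toAdd_eq_zero.symm]
  rw [zsmul_eq_mul, mul_one] at h2
  exact_mod_cast h2

lemma t0_pow (k : ℕ) : ∀ q : ℚ, (t0 ^ k) q = q * 2⁻¹ ^ k := by
  induction k with
  | zero => intro q; simp
  | succ k ih =>
    intro q
    rw [pow_succ, Equiv.Perm.mul_apply, ih, t0_apply, pow_succ]
    ring

lemma t0_zpow (n : ℤ) : ∀ q : ℚ, (t0 ^ n) q = q * 2⁻¹ ^ n := by
  cases n with
  | ofNat k =>
    intro q
    rw [Int.ofNat_eq_coe, zpow_natCast, zpow_natCast]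
    exact t0_pow k q
  | negSucc k =>
    intro q
    rw [zpow_negSucc, zpow_negSucc]
    have hinj := (t0 ^ (k + 1)).injective
    apply hinj
    rw [← Equiv.Perm.mul_apply, mul_inv_cancel, Equiv.Perm.one_apply, t0_pow]
    field_simp

lemma hinjt : Function.Injective (zpowersHom (Equiv.Perm ℚ) t0) := by
  rw [injective_iff_map_eq_one]
  intro n hn
  have h : t0 ^ n.toAdd = 1 := hn
  have h2 : (t0 ^ n.toAdd) 1 = (1 : Equiv.Perm ℚ) 1 :=
    congrArg (fun f : Equiv.Perm ℚ => f 1) h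
  rw [t0_zpow, Equiv.Perm.one_apply, one_mul] at h2
  have : ((2 : ℚ)⁻¹) ^ n.toAdd = (2:ℚ)⁻¹ ^ (0 : ℤ) := by rw [h2, zpow_zero]
  have hz := zpow_right_injective₀ (a := (2:ℚ)⁻¹) (by norm_num) (by norm_num) this
  exact toAdd_eq_zero.mp hz

def Agrp : Subgroup (Equiv.Perm ℚ) := (zpowersHom (Equiv.Perm ℚ) x0).range
def Bgrp : Subgroup (Equiv.Perm ℚ) := (zpowersHom (Equiv.Perm ℚ) t0).range

def φiso : Agrp ≃* Bgrp :=
  (MonoidHom.ofInjective hinjx).symm.trans (MonoidHom.ofInjective hinjt)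

lemma x0_mem : x0 ∈ Agrp := ⟨Multiplicative.ofAdd 1, by simp [zpowersHom_apply]⟩

lemma φiso_x0 : (φiso ⟨x0, x0_mem⟩ : Equiv.Perm ℚ) = t0 := by
  have h1 : (MonoidHom.ofInjective hinjx).symm ⟨x0, x0_mem⟩ = Multiplicative.ofAdd 1 := by
    rw [MulEquiv.symm_apply_eq]
    apply Subtype.ext
    rw [MonoidHom.ofInjective_apply]
    simp [zpowersHom_apply]
  show ((MonoidHom.ofInjective hinjt) ((MonoidHom.ofInjective hinjx).symm ⟨x0, x0_mem⟩)
      : Equiv.Perm ℚ) = t0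
  rw [h1, MonoidHom.ofInjective_apply]
  simp [zpowersHom_apply]

abbrev H := HNNExtension (Equiv.Perm ℚ) Agrp Bgrp φiso

lemma conj_rel :
    HNNExtension.t * HNNExtension.of x0 * HNNExtension.t⁻¹ = (HNNExtension.of t0 : H) := by
  have h := HNNExtension.equiv_eq_conj (φ := φiso) ⟨x0, x0_mem⟩
  rw [φiso_x0] at h
  exact h.symm

lemma hkey : x0 * t0 = t0 * (x0 * x0) := by
  apply Equiv.ext
  intro q
  simp only [Equiv.Perm.mul_apply, x0_apply, t0_apply]
  ring

lemma hperm : x0⁻¹ * (x0⁻¹ * t0⁻¹ * x0 * t0) = 1 := by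
  have h1 : t0⁻¹ * (x0 * t0) = x0 * x0 := by
    rw [hkey]
    exact inv_mul_cancel_left _ _
  calc x0⁻¹ * (x0⁻¹ * t0⁻¹ * x0 * t0)
      = x0⁻¹ * (x0⁻¹ * (t0⁻¹ * (x0 * t0))) := by group
    _ = x0⁻¹ * (x0⁻¹ * (x0 * x0)) := by rw [h1]
    _ = 1 := by group

def f2 : Fin 2 → H := ![HNNExtension.of x0, HNNExtension.t⁻¹]

lemma hlift : ∀ r ∈ ({rel} : Set (FreeGroup (Fin 2))), FreeGroup.lift f2 r = 1 := by
  rintro r hr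
  rw [Set.mem_singleton_iff] at hr
  subst hr
  have hf0 : FreeGroup.lift f2 a = HNNExtension.of x0 := by
    simp [a, f2]
  have hf1 : FreeGroup.lift f2 b = HNNExtension.t⁻¹ := by
    simp [b, f2]
  simp only [rel, map_mul, map_inv, hf0, hf1, inv_inv]
  rw [conj_rel]
  rw [← map_inv, ← map_inv, ← map_mul, ← map_mul, ← map_mul, ← map_mul, hperm, map_one]

def θ : B →* H := PresentedGroup.toGroup hlift

lemma A_ne_one : A ≠ 1 := by
  intro hA
  have h1 : θ A = 1 := by rw [hA, map_one]
  have h2 : θ A = HNNExtension.of x0 := by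
    show θ (PresentedGroup.of 0) = _
    rw [θ, PresentedGroup.toGroup.of]
    simp [f2]
  rw [h2] at h1
  have : x0 = 1 := HNNExtension.of_injective (φ := φiso)
    (show (HNNExtension.of x0 : H) = HNNExtension.of 1 by rw [h1, map_one])
  exact x0_ne_one this

end HNNModel

/-- The Baumslag group is not residually finite: `a ≠ 1` in `B`, yet the image
of `a` in every finite quotient of `B` is trivial. -/
theorem stmt14 :
    A ≠ 1 ∧ ∀ (Q : Type) [Group Q] [Finite Q] (φ : B →* Q), φ A = 1 := by
  constructor
  · exact A_ne_one
  · intro Q _ _ φ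
    have hmk : (PresentedGroup.mk ({rel} : Set (FreeGroup (Fin 2))) rel : B) = 1 := by
      apply (QuotientGroup.eq_one_iff rel).2
      exact Subgroup.subset_normalClosure (Set.mem_singleton rel)
    set ψ := φ.comp (PresentedGroup.mk ({rel} : Set (FreeGroup (Fin 2)))) with hψ
    have h0 : ψ rel = 1 := by
      rw [hψ, MonoidHom.comp_apply, hmk, map_one]
    have h1 : (ψ a)⁻¹ * ((ψ a)⁻¹ * ((ψ b)⁻¹ * ψ a * ψ b)⁻¹ * ψ a *
        ((ψ b)⁻¹ * ψ a * ψ b)) = 1 := by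
      simpa only [rel, map_mul, map_inv] using h0
    have hx1 : ψ a = 1 := conj_sq_eq h1
    have hAa : φ A = ψ a := rfl
    rw [hAa, hx1]

end Stmt14
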